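/- Let ℋ be a real Hilbert space, H a bounded self-adjoint linear operator on ℋ, and A, G bounded linear operators on ℋ such that ⟨Hψ, Aψ⟩ − ⟨ψ, A(Hψ)⟩ = ‖Gψ‖² for all ψ ∈ ℋ. If φ : ℝ → ℋ is twice continuously differentiable and satisfies φ''(t) + H(φ(t)) = 0 for all t, then for all real numbers 0 ≤ T, ∫_0^T ‖G φ(t)‖² dt = ( ⟨φ(T), A φ'(T)⟩ − ⟨φ'(T), A φ(T)⟩ ) − ( ⟨φ(0), A φ'(0)⟩ − ⟨φ'(0), A φ(0)⟩ ). In particular, ∫_0^T ‖G φ(t)‖² dt ≤ 2‖A‖·( ‖φ(T)‖‖φ'(T)‖ + ‖φ(0)‖‖φ'(0)‖ ). -/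

import Mathlib

open scoped RealInnerProductSpace

theorem propagation_observable_spacetime_estimate
    {ℋ : Type*} [NormedAddCommGroup ℋ] [InnerProductSpace ℝ ℋ] [CompleteSpace ℋ]
    (H A G : ℋ →L[ℝ] ℋ)
    (hH : ∀ x y : ℋ, ⟪H x, y⟫ = ⟪x, H y⟫)
    (hcomm : ∀ ψ : ℋ, ⟪H ψ, A ψ⟫ - ⟪ψ, A (H ψ)⟫ = ‖G ψ‖ ^ 2)
    (φ φ' φ'' : ℝ → ℋ)
    (hφ : ∀ t : ℝ, HasDerivAt φ (φ' t) t)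
    (hφ' : ∀ t : ℝ, HasDerivAt φ' (φ'' t) t)
    (hφ''cont : Continuous φ'')
    (heq : ∀ t : ℝ, φ'' t + H (φ t) = 0)
    (T : ℝ) (hT : 0 ≤ T) :
    (∫ t in (0 : ℝ)..T, ‖G (φ t)‖ ^ 2)
        = (⟪φ T, A (φ' T)⟫ - ⟪φ' T, A (φ T)⟫)
          - (⟪φ 0, A (φ' 0)⟫ - ⟪φ' 0, A (φ 0)⟫) ∧
    (∫ t in (0 : ℝ)..T, ‖G (φ t)‖ ^ 2)
        ≤ 2 * ‖A‖ * (‖φ T‖ * ‖φ' T‖ + ‖φ 0‖ * ‖φ' 0‖) := by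
  set F : ℝ → ℝ := fun t => ⟪φ t, A (φ' t)⟫ - ⟪φ' t, A (φ t)⟫ with hF
  have hder : ∀ t : ℝ, HasDerivAt F (‖G (φ t)‖ ^ 2) t := by
    intro t
    have h1 : HasDerivAt (fun t => A (φ' t)) (A (φ'' t)) t :=
      (A.hasFDerivAt.comp_hasDerivAt t (hφ' t))
    have h2 : HasDerivAt (fun t => A (φ t)) (A (φ' t)) t :=
      (A.hasFDerivAt.comp_hasDerivAt t (hφ t))
    have hA : HasDerivAt (fun t => ⟪φ t, A (φ' t)⟫)
        (⟪φ t, A (φ'' t)⟫ + ⟪φ' t, A (φ' t)⟫) t := (hφ t).inner ℝ h1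
    have hB : HasDerivAt (fun t => ⟪φ' t, A (φ t)⟫)
        (⟪φ' t, A (φ' t)⟫ + ⟪φ'' t, A (φ t)⟫) t := (hφ' t).inner ℝ h2
    have := hA.sub hB
    have heqt : φ'' t = -H (φ t) := eq_neg_of_add_eq_zero_left (heq t)
    rw [heqt] at this
    convert this using 1
    · rfl
    · rfl
    · rfl
    have := hcomm (φ t)
    simp only [inner_neg_left, inner_neg_right, map_neg]
    linarith [this]
  have hcont : Continuous fun t => ‖G (φ t)‖ ^ 2 := by
    have hφc : Continuous φ := continuous_iff_continuousAt.2 fun t => (hφ t).continuousAt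
    fun_prop
  have hint : (∫ t in (0 : ℝ)..T, ‖G (φ t)‖ ^ 2) = F T - F 0 := by
    exact intervalIntegral.integral_eq_sub_of_hasDerivAt
      (fun t _ => hder t) (hcont.intervalIntegrable 0 T)
  refine ⟨hint, ?_⟩
  rw [hint]
  have key : ∀ x y : ℋ, ⟪x, A y⟫ - ⟪y, A x⟫ ≤ 2 * ‖A‖ * (‖x‖ * ‖y‖) := by
    intro x y
    have h1 : ⟪x, A y⟫ ≤ ‖A‖ * (‖x‖ * ‖y‖) := by
      calc ⟪x, A y⟫ ≤ ‖x‖ * ‖A y‖ := real_inner_le_norm x (A y)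
        _ ≤ ‖x‖ * (‖A‖ * ‖y‖) := by
            exact mul_le_mul_of_nonneg_left (A.le_opNorm y) (norm_nonneg x)
        _ = ‖A‖ * (‖x‖ * ‖y‖) := by ring
    have h2 : -(‖A‖ * (‖x‖ * ‖y‖)) ≤ ⟪y, A x⟫ := by
      have := real_inner_le_norm y (A x)
      have h3 : |⟪y, A x⟫| ≤ ‖y‖ * ‖A x‖ := abs_real_inner_le_norm y (A x)
      have h4 : ‖y‖ * ‖A x‖ ≤ ‖A‖ * (‖x‖ * ‖y‖) := by
        calc ‖y‖ * ‖A x‖ ≤ ‖y‖ * (‖A‖ * ‖x‖) :=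
              mul_le_mul_of_nonneg_left (A.le_opNorm x) (norm_nonneg y)
          _ = ‖A‖ * (‖x‖ * ‖y‖) := by ring
      linarith [neg_abs_le (⟪y, A x⟫ : ℝ)]
    linarith
  have hT' : F T ≤ 2 * ‖A‖ * (‖φ T‖ * ‖φ' T‖) := key (φ T) (φ' T)
  have h0' : -(2 * ‖A‖ * (‖φ 0‖ * ‖φ' 0‖)) ≤ F 0 := by
    have := key (φ' 0) (φ 0)
    have : F 0 = -(⟪φ' 0, A (φ 0)⟫ - ⟪φ 0, A (φ' 0)⟫) := by simp [hF]
    rw [this]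
    have hk := key (φ' 0) (φ 0)
    have : ‖φ' 0‖ * ‖φ 0‖ = ‖φ 0‖ * ‖φ' 0‖ := by ring
    linarith [key (φ' 0) (φ 0)]
  have : F T - F 0 ≤ 2 * ‖A‖ * (‖φ T‖ * ‖φ' T‖) + 2 * ‖A‖ * (‖φ 0‖ * ‖φ' 0‖) := by
    linarith
  linarith
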